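/- Let G be a group acting on a set Y, and let C : G × Y → ℝ be a bounded function satisfying the cocycle relation C(gh, y) = C(h, y) + C(g, hy) for all g, h ∈ G and y ∈ Y. Then the function ψ(y) := sup_{g ∈ G} C(g, y) is well-defined (finite) and solves the cohomological equation C(g, y) = ψ(y) − ψ(gy) for all g ∈ G and y ∈ Y. -/

import Mathlib

/-- Let `G` be a group acting on a set `Y`, and let `C : G × Y → ℝ` be a
bounded function satisfying the cocycle relation `C(gh, y) = C(h, y) + C(g, hy)`. Then
`ψ(y) := sup_{g ∈ G} C(g, y)` solves the cohomological equation
`C(g, y) = ψ(y) − ψ(gy)`. -/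
theorem stmt_0 {G Y : Type*} [Group G] [MulAction G Y]
    (C : G → Y → ℝ) (M : ℝ)
    (hbdd : ∀ (g : G) (y : Y), |C g y| ≤ M)
    (hcocycle : ∀ (g h : G) (y : Y), C (g * h) y = C h y + C g (h • y)) :
    ∀ (g : G) (y : Y), C g y = (⨆ g' : G, C g' y) - ⨆ g' : G, C g' (g • y) := by
  intro g y
  have hb : ∀ z : Y, BddAbove (Set.range fun g' : G => C g' z) := by
    intro z
    exact ⟨M, by rintro _ ⟨g', rfl⟩; exact (abs_le.mp (hbdd g' z)).2⟩
  have key : (⨆ g' : G, C g' y) = C g y + ⨆ g' : G, C g' (g • y) := by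
    have h1 : (⨆ g' : G, C g' y) = ⨆ g' : G, C (g' * g) y := by
      rw [iSup, iSup]
      congr 1
      ext x
      constructor
      · rintro ⟨g', rfl⟩; exact ⟨g' * g⁻¹, by simp⟩
      · rintro ⟨g', rfl⟩; exact ⟨g' * g, rfl⟩
    rw [h1]
    have h2 : ∀ g' : G, C (g' * g) y = C g y + C g' (g • y) := fun g' => hcocycle g' g y
    simp only [h2]
    apply le_antisymm
    · apply ciSup_le
      intro g'
      have := le_ciSup (hb (g • y)) g'
      linarith
    · rw [show (C g y + ⨆ g' : G, C g' (g • y)) =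
        C g y + ⨆ g' : G, C g' (g • y) from rfl]
      have hb2 : BddAbove (Set.range fun g' : G => C g y + C g' (g • y)) := by
        obtain ⟨b, hbub⟩ := hb (g • y)
        exact ⟨C g y + b, by rintro _ ⟨g', rfl⟩; exact add_le_add_right (hbub ⟨g', rfl⟩) _⟩
      have : (⨆ g' : G, C g' (g • y)) ≤ (⨆ g' : G, C g y + C g' (g • y)) - C g y := by
        apply ciSup_le
        intro g'
        have := le_ciSup hb2 g'
        linarith
      linarith
  linarith [key]
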